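/- Let Θ be a d×d integer matrix each of whose columns is a nonzero 0-1 vector. Then the polynomial q_Θ belongs to the ideal I if and only if det Θ is odd. -/

import Mathlib

open MvPolynomial

/-- For a `d×d` integer matrix `Θ` with 0-1 columns, the polynomial
`q_Θ(z) = ∏_{columns θ of Θ} (1 + z^θ)/2`, where `z^θ = z₁^{θ₁}⋯z_d^{θ_d}`. -/
noncomputable def qpoly {d : ℕ} (Θ : Matrix (Fin d) (Fin d) ℤ) : MvPolynomial (Fin d) ℝ :=
  ∏ c : Fin d, (C (1 / 2 : ℝ) * (1 + ∏ i : Fin d, X i ^ (Θ i c).toNat))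

noncomputable def fchi (x : ZMod 2) : ℝ := if x = 0 then 1 else -1

lemma fchi_add (x y : ZMod 2) : fchi (x + y) = fchi x * fchi y := by
  have h : ∀ z : ZMod 2, z = 0 ∨ z = 1 := by decide
  rcases h x with hx | hx <;> rcases h y with hy | hy <;>
    subst hx <;> subst hy <;> norm_num [fchi] <;> decide

lemma fchi_sum {ι : Type*} (s : Finset ι) (g : ι → ZMod 2) :
    ∏ i ∈ s, fchi (g i) = fchi (∑ i ∈ s, g i) := by
  classical
  induction s using Finset.induction with
  | empty => simp [fchi]
  | insert _ _ h ih => rw [Finset.prod_insert h, Finset.sum_insert h, ih, fchi_add]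

lemma eval_qpoly {d : ℕ} (Θ : Matrix (Fin d) (Fin d) ℤ) (ε : Fin d → ℝ) :
    eval ε (qpoly Θ) = ∏ c : Fin d, (1 / 2 * (1 + ∏ i : Fin d, ε i ^ (Θ i c).toNat)) := by
  simp [qpoly]

lemma factor_eq {d : ℕ} (Θ : Matrix (Fin d) (Fin d) ℤ)
    (h01 : ∀ i c, Θ i c = 0 ∨ Θ i c = 1)
    (ε : Fin d → ℝ) (s : Fin d → ZMod 2)
    (hs : ∀ i, (s i = 0 ∧ ε i = 1) ∨ (s i = 1 ∧ ε i = -1)) (c : Fin d) :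
    ∏ i : Fin d, ε i ^ (Θ i c).toNat = fchi (∑ i : Fin d, s i * ((Θ i c : ZMod 2))) := by
  rw [← fchi_sum]
  refine Finset.prod_congr rfl fun i _ => ?_
  rcases h01 i c with h | h <;> rcases hs i with ⟨h1, h2⟩ | ⟨h1, h2⟩ <;>
    simp [h, h1, h2, fchi]

/-- If each column of `Θ` is a nonzero 0-1 vector, then `q_Θ` vanishes on
`Z' = {ε ∈ {−1,1}^d : ε ≠ (1,…,1)}` if and only if `det Θ` is odd. -/
theorem stmt_1 (d : ℕ) (hd : 1 ≤ d) (Θ : Matrix (Fin d) (Fin d) ℤ)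
    (h01 : ∀ i c, Θ i c = 0 ∨ Θ i c = 1)
    (hnz : ∀ c, ∃ i, Θ i c ≠ 0) :
    (∀ ε : Fin d → ℝ, (∀ i, ε i = -1 ∨ ε i = 1) → ε ≠ (fun _ => 1) →
      eval ε (qpoly Θ) = 0) ↔ Odd Θ.det := by
  classical
  have h2 : ∀ z : ZMod 2, z = 0 ∨ z = 1 := by decide
  set M : Matrix (Fin d) (Fin d) (ZMod 2) := Θ.map (fun x => (x : ZMod 2)) with hM
  have hMapp : ∀ i c, M i c = ((Θ i c : ZMod 2)) := fun i c => rfl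
  have hdet : Odd Θ.det ↔ M.det ≠ 0 := by
    have : (Θ.det : ZMod 2) = M.det := RingHom.map_det (Int.castRingHom (ZMod 2)) Θ
    rw [← this, Ne, ZMod.intCast_zmod_eq_zero_iff_dvd, Int.odd_iff]
    push_cast
    constructor <;> intro h <;> omega
  have key : (∃ v, v ≠ 0 ∧ Matrix.vecMul v M = 0) ↔ M.det = 0 := Matrix.exists_vecMul_eq_zero_iff
  rw [hdet, Ne, ← key]
  push_neg
  constructor
  · intro hvan v hv0
    intro hvM
    set ε : Fin d → ℝ := fun i => if v i = 0 then 1 else -1 with hε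
    have hεpm : ∀ i, ε i = -1 ∨ ε i = 1 := fun i => by
      by_cases h : v i = 0 <;> simp [hε, h]
    have hεne : ε ≠ fun _ => 1 := by
      intro hE
      apply hv0
      funext i
      have := congrFun hE i
      by_cases h : v i = 0
      · exact h
      · simp [hε, h] at this
        norm_num at this
    have hs : ∀ i, (v i = 0 ∧ ε i = 1) ∨ (v i = 1 ∧ ε i = -1) := fun i => by
      rcases h2 (v i) with h | h
      · exact Or.inl ⟨h, by simp [hε, h]⟩
      · refine Or.inr ⟨h, by simp [hε, h]⟩
    have hv := hvan ε hεpm hεne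
    rw [eval_qpoly] at hv
    have hone : ∀ c : Fin d, (1 / 2 * (1 + ∏ i : Fin d, ε i ^ (Θ i c).toNat) : ℝ) = 1 := by
      intro c
      rw [factor_eq Θ h01 ε v hs c]
      have hsum : ∑ i : Fin d, v i * ((Θ i c : ZMod 2)) = 0 := by
        have := congrFun hvM c
        simpa [Matrix.vecMul, dotProduct, hMapp] using this
      rw [hsum]
      norm_num [fchi]
    rw [Finset.prod_congr rfl (fun c _ => hone c)] at hv
    simp at hv
  · intro hker ε hεpm hεne
    set s : Fin d → ZMod 2 := fun i => if ε i = 1 then 0 else 1 with hsdef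
    have hs : ∀ i, (s i = 0 ∧ ε i = 1) ∨ (s i = 1 ∧ ε i = -1) := fun i => by
      rcases hεpm i with h | h
      · refine Or.inr ⟨?_, h⟩
        simp only [hsdef, h]
        norm_num
      · exact Or.inl ⟨by simp [hsdef, h], h⟩
    have hs0 : s ≠ 0 := by
      intro h0
      apply hεne
      funext i
      rcases hs i with ⟨h1, h2⟩ | ⟨h1, h2⟩
      · exact h2
      · exfalso
        have := congrFun h0 i
        rw [h1] at this
        exact one_ne_zero this
    have hsM := hker s hs0
    obtain ⟨c, hc⟩ := Function.ne_iff.mp hsM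
    have hsum : ∑ i : Fin d, s i * ((Θ i c : ZMod 2)) = 1 := by
      have h' : (Matrix.vecMul s M) c ≠ 0 := hc
      rw [show (Matrix.vecMul s M) c = ∑ i : Fin d, s i * ((Θ i c : ZMod 2)) by
        simp [Matrix.vecMul, dotProduct, hMapp]] at h'
      rcases h2 (∑ i : Fin d, s i * ((Θ i c : ZMod 2))) with h | h
      · exact absurd h h'
      · exact h
    rw [eval_qpoly]
    refine Finset.prod_eq_zero (Finset.mem_univ c) ?_
    rw [factor_eq Θ h01 ε s hs c, hsum]
    norm_num [fchi]
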